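/- (P-bracketing of HOS contexts) Let C = C_{h,K,γ}^{γ⃗ᵢ,c} be a passive context configuration where h, K, γ are built from HOS syntax and (A⃗ᵢ, γ⃗ᵢ) ∈ AVal(γ)(Γ). Then every trace in Tr_HOSC(C) is P-bracketed. -/

import Mathlib

set_option maxHeartbeats 1000000
set_option autoImplicit true

namespace OGS

/-! ## Types -/

inductive Ty : Type
  | unit | int | bool
  | ref : Ty → Ty
  | prod : Ty → Ty → Ty
  | arrow : Ty → Ty → Ty
  | cont : Ty → Ty
  deriving DecidableEq

/-- Ground types ι ::= Unit | Int | Bool | ref ι -/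
inductive Ty.Ground : Ty → Prop
  | unit : Ty.Ground .unit
  | int : Ty.Ground .int
  | bool : Ty.Ground .bool
  | ref {ι : Ty} : Ty.Ground ι → Ty.Ground (.ref ι)

/-- GOSC types: reference types restricted to ground contents. -/
def Ty.isGOSC : Ty → Prop
  | .unit => True
  | .int => True
  | .bool => True
  | .ref ι => Ty.Ground ι
  | .prod a b => a.isGOSC ∧ b.isGOSC
  | .arrow a b => a.isGOSC ∧ b.isGOSC
  | .cont a => a.isGOSC

/-- HOS types: no cont constructor. -/
def Ty.isHOS : Ty → Prop
  | .unit => True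
  | .int => True
  | .bool => True
  | .ref a => a.isHOS
  | .prod a b => a.isHOS ∧ b.isHOS
  | .arrow a b => a.isHOS ∧ b.isHOS
  | .cont _ => False

/-- cont- and ref-free types -/
def Ty.crFree : Ty → Prop
  | .unit => True
  | .int => True
  | .bool => True
  | .ref _ => False
  | .prod a b => a.crFree ∧ b.crFree
  | .arrow a b => a.crFree ∧ b.crFree
  | .cont _ => False

inductive Frag | HOSC | GOSC | HOS | GOS
  deriving DecidableEq

def Frag.tyOK : Frag → Ty → Prop
  | .HOSC, _ => True
  | .GOSC, τ => τ.isGOSC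
  | .HOS, τ => τ.isHOS
  | .GOS, τ => τ.isGOSC ∧ τ.isHOS

/-- fragments featuring control (callcc/throw/cont) -/
def Frag.hasCont : Frag → Prop
  | .HOSC => True
  | .GOSC => True
  | .HOS => False
  | .GOS => False

/-! ## Names -/

structure FName where
  id : ℕ
  dom : Ty
  cod : Ty
  deriving DecidableEq

structure CName where
  id : ℕ
  ty : Ty
  deriving DecidableEq

inductive Name
  | fn : FName → Name
  | cn : CName → Name
  deriving DecidableEq

/-- the designated error function name errn : Unit → Unit -/
def errn : FName := ⟨0, .unit, .unit⟩

/-- the designated terminal continuation names tern_σ -/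
def tern (σ : Ty) : CName := ⟨0, σ⟩

/-- ◦ = { tern_σ | σ } -/
def circNames : Set Name := {n | ∃ σ : Ty, n = Name.cn (tern σ)}

/-! ## Terms -/

inductive ArithOp | add | sub | mul
inductive CmpOp | eq | lt

inductive Tm : Type
  | unit | tt | ff
  | int : ℤ → Tm
  | bvar : ℕ → Tm
  | errv : Tm                      -- the designated error variable err : Unit → Unit
  | loc : ℕ → Tm
  | fname : FName → Tm             -- extended syntax: function names as constants
  | hole : Tm                      -- the hole • of contexts / evaluation contexts
  | pair : Tm → Tm → Tm
  | fst : Tm → Tm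
  | snd : Tm → Tm
  | lam : Ty → Tm → Tm             -- de Bruijn
  | fix : Ty → Ty → Tm → Tm        -- fix y (x:σ).M : σ→τ, bvar 0 = x, bvar 1 = y
  | app : Tm → Tm → Tm
  | newref : Ty → Tm → Tm
  | deref : Tm → Tm
  | assign : Tm → Tm → Tm
  | ifte : Tm → Tm → Tm → Tm
  | arith : ArithOp → Tm → Tm → Tm
  | cmp : CmpOp → Tm → Tm → Tm
  | refeq : Tm → Tm → Tm
  | callcc : Ty → Tm → Tm          -- callcc_τ(x.M), binds x
  | throw : Ty → Tm → Tm → Tm      -- throw_τ M to N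
  | contV : Ty → Ty → Tm → Tm      -- cont_τ(K), K : τ ⇒ σ
  | contE : Ty → Tm → CName → Tm   -- extended: cont_τ(K, c)

inductive IsVal : Tm → Prop
  | unit : IsVal .unit
  | tt : IsVal .tt
  | ff : IsVal .ff
  | int (n : ℤ) : IsVal (.int n)
  | bvar (i : ℕ) : IsVal (.bvar i)
  | errv : IsVal .errv
  | loc (ℓ : ℕ) : IsVal (.loc ℓ)
  | fname (f : FName) : IsVal (.fname f)
  | pair {u v : Tm} : IsVal u → IsVal v → IsVal (.pair u v)
  | lam (τ : Ty) (M : Tm) : IsVal (.lam τ M)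
  | fix (σ τ : Ty) (M : Tm) : IsVal (.fix σ τ M)
  | contV (τ σ : Ty) (K : Tm) : IsVal (.contV τ σ K)
  | contE (τ : Ty) (K : Tm) (c : CName) : IsVal (.contE τ K c)

/-- substitution of a (closed) term `V` for de Bruijn index `k` -/
def Tm.subst : Tm → ℕ → Tm → Tm
  | .bvar i, k, V => if i = k then V else if k < i then .bvar (i - 1) else .bvar i
  | .pair a b, k, V => .pair (a.subst k V) (b.subst k V)
  | .fst a, k, V => .fst (a.subst k V)
  | .snd a, k, V => .snd (a.subst k V)
  | .lam τ a, k, V => .lam τ (a.subst (k+1) V)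
  | .fix σ τ a, k, V => .fix σ τ (a.subst (k+2) V)
  | .app a b, k, V => .app (a.subst k V) (b.subst k V)
  | .newref τ a, k, V => .newref τ (a.subst k V)
  | .deref a, k, V => .deref (a.subst k V)
  | .assign a b, k, V => .assign (a.subst k V) (b.subst k V)
  | .ifte a b c, k, V => .ifte (a.subst k V) (b.subst k V) (c.subst k V)
  | .arith op a b, k, V => .arith op (a.subst k V) (b.subst k V)
  | .cmp op a b, k, V => .cmp op (a.subst k V) (b.subst k V)
  | .refeq a b, k, V => .refeq (a.subst k V) (b.subst k V)
  | .callcc τ a, k, V => .callcc τ (a.subst (k+1) V)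
  | .throw τ a b, k, V => .throw τ (a.subst k V) (b.subst k V)
  | .contV τ σ K, k, V => .contV τ σ (K.subst k V)
  | .contE τ K c, k, V => .contE τ (K.subst k V) c
  | t, _, _ => t

/-- simultaneous substitution of a list of closed values for the free variables 0,1,2,… -/
def Tm.msubst (M : Tm) (γ : List Tm) : Tm := γ.foldl (fun N V => N.subst 0 V) M

/-- filling the hole of a context/evaluation context (capturing; does not descend
into the evaluation-context argument of continuation constants, whose hole is their own) -/
def Tm.fill : Tm → Tm → Tm
  | .hole, M => M
  | .pair a b, M => .pair (a.fill M) (b.fill M)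
  | .fst a, M => .fst (a.fill M)
  | .snd a, M => .snd (a.fill M)
  | .lam τ a, M => .lam τ (a.fill M)
  | .fix σ τ a, M => .fix σ τ (a.fill M)
  | .app a b, M => .app (a.fill M) (b.fill M)
  | .newref τ a, M => .newref τ (a.fill M)
  | .deref a, M => .deref (a.fill M)
  | .assign a b, M => .assign (a.fill M) (b.fill M)
  | .ifte a b c, M => .ifte (a.fill M) (b.fill M) (c.fill M)
  | .arith op a b, M => .arith op (a.fill M) (b.fill M)
  | .cmp op a b, M => .cmp op (a.fill M) (b.fill M)
  | .refeq a b, M => .refeq (a.fill M) (b.fill M)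
  | .callcc τ a, M => .callcc τ (a.fill M)
  | .throw τ a b, M => .throw τ (a.fill M) (b.fill M)
  | t, _ => t

/-- list of all subterm occurrences -/
def Tm.subterms : Tm → List Tm
  | .pair a b => .pair a b :: (a.subterms ++ b.subterms)
  | .fst a => .fst a :: a.subterms
  | .snd a => .snd a :: a.subterms
  | .lam τ a => .lam τ a :: a.subterms
  | .fix σ τ a => .fix σ τ a :: a.subterms
  | .app a b => .app a b :: (a.subterms ++ b.subterms)
  | .newref τ a => .newref τ a :: a.subterms
  | .deref a => .deref a :: a.subterms
  | .assign a b => .assign a b :: (a.subterms ++ b.subterms)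
  | .ifte a b c => .ifte a b c :: (a.subterms ++ b.subterms ++ c.subterms)
  | .arith op a b => .arith op a b :: (a.subterms ++ b.subterms)
  | .cmp op a b => .cmp op a b :: (a.subterms ++ b.subterms)
  | .refeq a b => .refeq a b :: (a.subterms ++ b.subterms)
  | .callcc τ a => .callcc τ a :: a.subterms
  | .throw τ a b => .throw τ a b :: (a.subterms ++ b.subterms)
  | .contV τ σ K => .contV τ σ K :: K.subterms
  | .contE τ K c => .contE τ K c :: K.subterms
  | t => [t]

/-- number of occurrences of the (ambient) hole, not counting holes belonging
to continuation constants -/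
def Tm.holeCount : Tm → ℕ
  | .hole => 1
  | .pair a b => a.holeCount + b.holeCount
  | .fst a => a.holeCount
  | .snd a => a.holeCount
  | .lam _ a => a.holeCount
  | .fix _ _ a => a.holeCount
  | .app a b => a.holeCount + b.holeCount
  | .newref _ a => a.holeCount
  | .deref a => a.holeCount
  | .assign a b => a.holeCount + b.holeCount
  | .ifte a b c => a.holeCount + b.holeCount + c.holeCount
  | .arith _ a b => a.holeCount + b.holeCount
  | .cmp _ a b => a.holeCount + b.holeCount
  | .refeq a b => a.holeCount + b.holeCount
  | .callcc _ a => a.holeCount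
  | .throw _ a b => a.holeCount + b.holeCount
  | _ => 0

/-- ν(M): the set of (function and continuation) names occurring in a term -/
def Tm.names (M : Tm) : Set Name :=
  {n | (∃ f, n = Name.fn f ∧ Tm.fname f ∈ M.subterms) ∨
       (∃ c, n = Name.cn c ∧ ∃ τ K, Tm.contE τ K c ∈ M.subterms)}

/-- surface (non-extended) syntax: no function-name constants, no cont_τ(K,c) -/
def Tm.extFree (M : Tm) : Prop :=
  (∀ f, Tm.fname f ∉ M.subterms) ∧ (∀ τ K c, Tm.contE τ K c ∉ M.subterms)

/-- no occurrence of a continuation constant cont_τ(K) -/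
def Tm.contVFree (M : Tm) : Prop := ∀ τ σ K, Tm.contV τ σ K ∉ M.subterms

def Tm.locFree (M : Tm) : Prop := ∀ ℓ, Tm.loc ℓ ∉ M.subterms

/-- syntactic conditions of cr-freeness: no continuation constants and no locations -/
def Tm.crFreeSyn (M : Tm) : Prop :=
  (∀ τ σ K, Tm.contV τ σ K ∉ M.subterms) ∧
  (∀ τ K c, Tm.contE τ K c ∉ M.subterms) ∧
  (∀ ℓ, Tm.loc ℓ ∉ M.subterms)

/-- head-constructor check for membership in a fragment's (surface) syntax -/
def Tm.headOK (x : Frag) : Tm → Prop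
  | .lam τ _ => x.tyOK τ
  | .fix σ τ _ => x.tyOK (Ty.arrow σ τ)
  | .newref τ _ => x.tyOK (Ty.ref τ)
  | .callcc τ _ => x.hasCont ∧ x.tyOK (Ty.cont τ)
  | .throw τ _ _ => x.hasCont ∧ x.tyOK τ
  | .contV τ σ _ => x.hasCont ∧ x.tyOK (Ty.cont τ) ∧ x.tyOK σ
  | .contE _ _ _ => False
  | .fname _ => False
  | _ => True

/-- `M` is built from the (surface) syntax of fragment `x` -/
def Tm.inFrag (x : Frag) (M : Tm) : Prop := ∀ N ∈ M.subterms, N.headOK x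

/-- head-constructor check for the name-extended syntax of a fragment -/
def Tm.headOKX (x : Frag) : Tm → Prop
  | .lam τ _ => x.tyOK τ
  | .fix σ τ _ => x.tyOK (Ty.arrow σ τ)
  | .newref τ _ => x.tyOK (Ty.ref τ)
  | .callcc τ _ => x.hasCont ∧ x.tyOK (Ty.cont τ)
  | .throw τ _ _ => x.hasCont ∧ x.tyOK τ
  | .contV τ σ _ => x.hasCont ∧ x.tyOK (Ty.cont τ) ∧ x.tyOK σ
  | .contE τ _ c => x.hasCont ∧ x.tyOK (Ty.cont τ) ∧ x.tyOK c.ty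
  | .fname f => x.tyOK (Ty.arrow f.dom f.cod)
  | _ => True

/-- `M` is built from the name-extended syntax of fragment `x` -/
def Tm.inFragX (x : Frag) (M : Tm) : Prop := ∀ N ∈ M.subterms, N.headOKX x

/-! ## Evaluation contexts -/

inductive IsECtx : Tm → Prop
  | hole : IsECtx .hole
  | pairV {v K : Tm} : IsVal v → IsECtx K → IsECtx (.pair v K)
  | pairK {K M : Tm} : IsECtx K → IsECtx (.pair K M)
  | fst {K : Tm} : IsECtx K → IsECtx (.fst K)
  | snd {K : Tm} : IsECtx K → IsECtx (.snd K)
  | appV {v K : Tm} : IsVal v → IsECtx K → IsECtx (.app v K)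
  | appK {K M : Tm} : IsECtx K → IsECtx (.app K M)
  | newref {τ : Ty} {K : Tm} : IsECtx K → IsECtx (.newref τ K)
  | deref {K : Tm} : IsECtx K → IsECtx (.deref K)
  | assignV {v K : Tm} : IsVal v → IsECtx K → IsECtx (.assign v K)
  | assignK {K M : Tm} : IsECtx K → IsECtx (.assign K M)
  | ifte {K M N : Tm} : IsECtx K → IsECtx (.ifte K M N)
  | arithK {op} {K M : Tm} : IsECtx K → IsECtx (.arith op K M)
  | arithV {op} {v K : Tm} : IsVal v → IsECtx K → IsECtx (.arith op v K)
  | cmpK {op} {K M : Tm} : IsECtx K → IsECtx (.cmp op K M)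
  | cmpV {op} {v K : Tm} : IsVal v → IsECtx K → IsECtx (.cmp op v K)
  | refeqK {K M : Tm} : IsECtx K → IsECtx (.refeq K M)
  | refeqV {v K : Tm} : IsVal v → IsECtx K → IsECtx (.refeq v K)
  | throwV {τ : Ty} {v K : Tm} : IsVal v → IsECtx K → IsECtx (.throw τ v K)
  | throwK {τ : Ty} {K M : Tm} : IsECtx K → IsECtx (.throw τ K M)

/-! ## Typing -/

abbrev LocTy := ℕ → Option Ty
abbrev TyCtx := List Ty

def emptyLocTy : LocTy := fun _ => none

/-- Typing judgment `Typed Σ Δ hσ M τ`: locations typed by `Σ`, de Bruijn context `Δ`,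
`hσ` is the type of the hole (if a hole is permitted). -/
inductive Typed : LocTy → TyCtx → Option Ty → Tm → Ty → Prop
  | unit : Typed St Δ hσ .unit .unit
  | tt : Typed St Δ hσ .tt .bool
  | ff : Typed St Δ hσ .ff .bool
  | int (n : ℤ) : Typed St Δ hσ (.int n) .int
  | bvar {i τ} : Δ[i]? = some τ → Typed St Δ hσ (.bvar i) τ
  | errv : Typed St Δ hσ .errv (.arrow .unit .unit)
  | loc {ℓ τ} : St ℓ = some τ → Typed St Δ hσ (.loc ℓ) (.ref τ)
  | fname (f : FName) : Typed St Δ hσ (.fname f) (.arrow f.dom f.cod)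
  | hole : Typed St Δ (some τ) .hole τ
  | pair : Typed St Δ hσ a σ → Typed St Δ hσ b τ → Typed St Δ hσ (.pair a b) (.prod σ τ)
  | fst : Typed St Δ hσ a (.prod σ τ) → Typed St Δ hσ (.fst a) σ
  | snd : Typed St Δ hσ a (.prod σ τ) → Typed St Δ hσ (.snd a) τ
  | lam : Typed St (σ :: Δ) hσ M τ → Typed St Δ hσ (.lam σ M) (.arrow σ τ)
  | fix : Typed St (σ :: Ty.arrow σ τ :: Δ) hσ M τ → Typed St Δ hσ (.fix σ τ M) (.arrow σ τ)
  | app : Typed St Δ hσ a (.arrow σ τ) → Typed St Δ hσ b σ → Typed St Δ hσ (.app a b) τ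
  | newref : Typed St Δ hσ a τ → Typed St Δ hσ (.newref τ a) (.ref τ)
  | deref : Typed St Δ hσ a (.ref τ) → Typed St Δ hσ (.deref a) τ
  | assign : Typed St Δ hσ a (.ref τ) → Typed St Δ hσ b τ → Typed St Δ hσ (.assign a b) .unit
  | ifte : Typed St Δ hσ a .bool → Typed St Δ hσ b τ → Typed St Δ hσ c τ →
      Typed St Δ hσ (.ifte a b c) τ
  | arith : Typed St Δ hσ a .int → Typed St Δ hσ b .int → Typed St Δ hσ (.arith op a b) .int
  | cmp : Typed St Δ hσ a .int → Typed St Δ hσ b .int → Typed St Δ hσ (.cmp op a b) .bool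
  | refeq : Typed St Δ hσ a (.ref τ) → Typed St Δ hσ b (.ref τ) →
      Typed St Δ hσ (.refeq a b) .bool
  | callcc : Typed St (Ty.cont τ :: Δ) hσ M τ → Typed St Δ hσ (.callcc τ M) τ
  | throw : Typed St Δ hσ a σ → Typed St Δ hσ b (.cont σ) → Typed St Δ hσ (.throw τ a b) τ
  | contV : IsECtx K → Typed St Δ (some τ) K σ → Typed St Δ hσ (.contV τ σ K) (.cont τ)
  | contE {c : CName} : IsECtx K → Typed St Δ (some τ) K c.ty →
      Typed St Δ hσ (.contE τ K c) (.cont τ)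

/-! ## Heaps and operational semantics -/

abbrev Heap := ℕ → Option Tm

def Heap.empty : Heap := fun _ => none
def Heap.upd (h : Heap) (ℓ : ℕ) (V : Tm) : Heap := fun ℓ' => if ℓ' = ℓ then some V else h ℓ'

def HeapTyped (St : LocTy) (h : Heap) : Prop :=
  ∀ ℓ τ, St ℓ = some τ → ∃ V, h ℓ = some V ∧ IsVal V ∧ Typed St [] none V τ

def Heap.inFrag (x : Frag) (h : Heap) : Prop := ∀ ℓ V, h ℓ = some V → Tm.inFrag x V
def Heap.inFragX (x : Frag) (h : Heap) : Prop := ∀ ℓ V, h ℓ = some V → Tm.inFragX x V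

def ArithOp.eval : ArithOp → ℤ → ℤ → ℤ
  | .add, m, n => m + n
  | .sub, m, n => m - n
  | .mul, m, n => m * n

def CmpOp.eval : CmpOp → ℤ → ℤ → Bool
  | .eq, m, n => decide (m = n)
  | .lt, m, n => decide (m < n)

def Tm.ofBool (b : Bool) : Tm := if b then .tt else .ff

/-- head reduction rules (the rules of Figure 2 not involving continuations) -/
inductive RedBase : Tm → Heap → Tm → Heap → Prop
  | beta {σ : Ty} {M V : Tm} {h : Heap} : IsVal V →
      RedBase (.app (.lam σ M) V) h (M.subst 0 V) h
  | fixbeta {σ τ : Ty} {M V : Tm} {h : Heap} : IsVal V →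
      RedBase (.app (.fix σ τ M) V) h ((M.subst 0 V).subst 0 (.fix σ τ M)) h
  | fst {v₁ v₂ : Tm} {h : Heap} : IsVal v₁ → IsVal v₂ → RedBase (.fst (.pair v₁ v₂)) h v₁ h
  | snd {v₁ v₂ : Tm} {h : Heap} : IsVal v₁ → IsVal v₂ → RedBase (.snd (.pair v₁ v₂)) h v₂ h
  | iftt {M N : Tm} {h : Heap} : RedBase (.ifte .tt M N) h M h
  | ifff {M N : Tm} {h : Heap} : RedBase (.ifte .ff M N) h N h
  | arith {op} {m n : ℤ} {h : Heap} :
      RedBase (.arith op (.int m) (.int n)) h (.int (op.eval m n)) h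
  | cmp {op} {m n : ℤ} {h : Heap} :
      RedBase (.cmp op (.int m) (.int n)) h (Tm.ofBool (op.eval m n)) h
  | refeq {ℓ ℓ' : ℕ} {h : Heap} :
      RedBase (.refeq (.loc ℓ) (.loc ℓ')) h (Tm.ofBool (decide (ℓ = ℓ'))) h
  | deref {ℓ : ℕ} {V : Tm} {h : Heap} : h ℓ = some V → RedBase (.deref (.loc ℓ)) h V h
  | newref {τ : Ty} {V : Tm} {ℓ : ℕ} {h : Heap} : IsVal V → h ℓ = none →
      RedBase (.newref τ V) h (.loc ℓ) (Heap.upd h ℓ V)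
  | assign {ℓ : ℕ} {V : Tm} {h : Heap} : IsVal V → h ℓ ≠ none →
      RedBase (.assign (.loc ℓ) V) h .unit (Heap.upd h ℓ V)

/-- the operational reduction (M,h) → (M',h') of HOSC (Figure 2) -/
inductive Red : Tm → Heap → Tm → Heap → Prop
  | base {K M M' : Tm} {h h' : Heap} : IsECtx K → RedBase M h M' h' →
      Red (K.fill M) h (K.fill M') h'
  | callcc {τ σ : Ty} {K M : Tm} {h : Heap} : IsECtx K →
      Red (K.fill (.callcc τ M)) h (K.fill (M.subst 0 (.contV τ σ K))) h
  | throw {τ σ σ' : Ty} {K K' V : Tm} {h : Heap} : IsECtx K → IsECtx K' → IsVal V →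
      Red (K.fill (.throw τ V (.contV σ σ' K'))) h (K'.fill V) h

def RedStar : Tm × Heap → Tm × Heap → Prop :=
  Relation.ReflTransGen (fun p q => Red p.1 p.2 q.1 q.2)

/-- (M,h) ⇓_ter -/
def TerObs (M : Tm) (h : Heap) : Prop := ∃ V h', RedStar (M, h) (V, h') ∧ IsVal V

/-- (M,h) ⇓_err : reaching K[err()] -/
def ErrObs (M : Tm) (h : Heap) : Prop :=
  ∃ K h', IsECtx K ∧ RedStar (M, h) (K.fill (.app .errv .unit), h')

/-- the extended operational semantics (M,c,h) → (M',c',h') with continuation names -/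
inductive ERed : Tm → CName → Heap → Tm → CName → Heap → Prop
  | base {K M M' : Tm} {c : CName} {h h' : Heap} : IsECtx K → RedBase M h M' h' →
      ERed (K.fill M) c h (K.fill M') c h'
  | callcc {τ : Ty} {K M : Tm} {c : CName} {h : Heap} : IsECtx K →
      ERed (K.fill (.callcc τ M)) c h (K.fill (M.subst 0 (.contE τ K c))) c h
  | throw {τ σ : Ty} {K K' V : Tm} {c c' : CName} {h : Heap} :
      IsECtx K → IsECtx K' → IsVal V →
      ERed (K.fill (.throw τ V (.contE σ K' c'))) c h (K'.fill V) c' h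

/-! ## Contextual and CIU approximation -/

inductive TKind | ter | err

def TKind.obs : TKind → Tm → Heap → Prop
  | .ter => TerObs
  | .err => ErrObs

def Tm.noErr (M : Tm) : Prop := Tm.errv ∉ M.subterms

/-- contextual approximation ≲_y^x : testing with contexts built from x-syntax,
observing y (for y = ter the context may not use the error variable). -/
def CtxApprox (x : Frag) (y : TKind) (Γ : TyCtx) (τ : Ty) (M₁ M₂ : Tm) : Prop :=
  ∀ C τ', Tm.inFrag x C → C.holeCount = 1 → (y = .ter → C.noErr) →
    (∀ N, Typed emptyLocTy Γ none N τ → Typed emptyLocTy [] none (C.fill N) τ') →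
    y.obs (C.fill M₁) Heap.empty → y.obs (C.fill M₂) Heap.empty

/-- γ is a substitution of closed values for the variables in Γ -/
def SubstTyped (St : LocTy) (γ : List Tm) (Γ : TyCtx) : Prop :=
  List.Forall₂ (fun V σ => IsVal V ∧ Typed St [] none V σ) γ Γ

/-- CIU approximation ≲_{ciu,y}^x -/
def CIU (x : Frag) (y : TKind) (Γ : TyCtx) (τ : Ty) (M₁ M₂ : Tm) : Prop :=
  ∀ St h K γ τ',
    HeapTyped St h → Heap.inFrag x h → (y = .ter → ∀ ℓ V, h ℓ = some V → Tm.noErr V) →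
    IsECtx K → Tm.inFrag x K → (y = .ter → K.noErr) → Typed St [] (some τ) K τ' →
    SubstTyped St γ Γ → (∀ V ∈ γ, Tm.inFrag x V) → (y = .ter → ∀ V ∈ γ, Tm.noErr V) →
    y.obs (K.fill (M₁.msubst γ)) h → y.obs (K.fill (M₂.msubst γ)) h

/-- cr-free terms -/
structure CrFreeTm (Γ : TyCtx) (M : Tm) (τ : Ty) : Prop where
  typed : Typed emptyLocTy Γ none M τ
  synt : M.crFreeSyn
  noName : ∀ f, Tm.fname f ∉ M.subterms
  noErrv : M.noErr
  bndΓ : ∀ σ ∈ Γ, σ.crFree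
  bndτ : τ.crFree

/-! ## Abstract values, actions, traces -/

inductive AVal
  | unit | tt | ff
  | int : ℤ → AVal
  | fn : FName → AVal
  | pair : AVal → AVal → AVal

def AVal.toTm : AVal → Tm
  | .unit => .unit
  | .tt => .tt
  | .ff => .ff
  | .int n => .int n
  | .fn f => .fname f
  | .pair a b => .pair a.toTm b.toTm

def AVal.names : AVal → Set Name
  | .fn f => {Name.fn f}
  | .pair a b => a.names ∪ b.names
  | _ => ∅

/-- each name occurs at most once -/
def AVal.linear : AVal → Prop
  | .pair a b => a.linear ∧ b.linear ∧ a.names ∩ b.names = ∅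
  | _ => True

inductive AVal.HasTy : AVal → Ty → Prop
  | unit : AVal.HasTy .unit .unit
  | tt : AVal.HasTy .tt .bool
  | ff : AVal.HasTy .ff .bool
  | int (n : ℤ) : AVal.HasTy (.int n) .int
  | fn (f : FName) : AVal.HasTy (.fn f) (.arrow f.dom f.cod)
  | pair {a b σ τ} : AVal.HasTy a σ → AVal.HasTy b τ → AVal.HasTy (.pair a b) (.prod σ τ)

abbrev FEnv := FName → Option Tm
abbrev KEnv := CName → Option Tm
abbrev XiEnv := CName → Option (Option CName)

/-- decomposition of a closed value into an abstract value pattern and a matching -/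
inductive Decomp : Tm → Ty → AVal → FEnv → Prop
  | unit : Decomp .unit .unit .unit (fun _ => none)
  | tt : Decomp .tt .bool .tt (fun _ => none)
  | ff : Decomp .ff .bool .ff (fun _ => none)
  | int (n : ℤ) : Decomp (.int n) .int (.int n) (fun _ => none)
  | fn {V : Tm} {f : FName} : IsVal V →
      Decomp V (.arrow f.dom f.cod) (.fn f) (Function.update (fun _ => none) f (some V))
  | pair {u v : Tm} {σ τ : Ty} {A B : AVal} {ga gb : FEnv} :
      Decomp u σ A ga → Decomp v τ B gb → (∀ f, ga f = none ∨ gb f = none) →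
      Decomp (.pair u v) (.prod σ τ) (.pair A B) (fun f => (ga f) <|> (gb f))

inductive Act
  | pa : CName → AVal → Act
  | pq : FName → AVal → CName → Act
  | oa : CName → AVal → Act
  | oq : FName → AVal → CName → Act

def Act.isP : Act → Bool
  | .pa _ _ => true
  | .pq _ _ _ => true
  | .oa _ _ => false
  | .oq _ _ _ => false

def Act.dual : Act → Act
  | .pa c A => .oa c A
  | .pq f A c => .oq f A c
  | .oa c A => .pa c A
  | .oq f A c => .pq f A c

/-- names introduced by an action -/
def Act.intro : Act → Set Name
  | .pa _ A => A.names
  | .oa _ A => A.names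
  | .pq _ A c => A.names ∪ {Name.cn c}
  | .oq _ A c => A.names ∪ {Name.cn c}

/-- the name used to communicate -/
def Act.subject : Act → Name
  | .pa c _ => Name.cn c
  | .oa c _ => Name.cn c
  | .pq f _ _ => Name.fn f
  | .oq f _ _ => Name.fn f

def Act.names (a : Act) : Set Name := {a.subject} ∪ a.intro

def Act.wf : Act → Prop
  | .pa _ A => A.linear
  | .oa _ A => A.linear
  | .pq _ A c => A.linear ∧ Name.cn c ∉ A.names
  | .oq _ A c => A.linear ∧ Name.cn c ∉ A.names

def traceNames (t : List Act) : Set Name := {n | ∃ a ∈ t, n ∈ a.names}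

def introducedBefore (pol : Bool) (t : List Act) (i : ℕ) : Set Name :=
  {n | ∃ j, ∃ hj : j < t.length, j < i ∧ (t[j]'hj).isP = pol ∧ n ∈ (t[j]'hj).intro}

/-- (N_O, N_P)-traces -/
def IsTrace (NO NP : Set Name) (t : List Act) : Prop :=
  List.Chain' (fun a b => a.isP ≠ b.isP) t ∧
  (∀ a ∈ t, a.wf) ∧
  (∀ a ∈ t, a.intro ∩ (NO ∪ NP) = ∅) ∧
  (∀ i, ∀ hi : i < t.length, ∀ j, ∀ hj : j < t.length, i ≠ j →
      (t[i]'hi).intro ∩ (t[j]'hj).intro = ∅) ∧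
  (∀ i, ∀ hi : i < t.length,
      (t[i]'hi).subject ∈
        (if (t[i]'hi).isP then NO else NP) ∪ introducedBefore (!(t[i]'hi).isP) t i)

/-! ## The LTS -/

structure ACfg where
  tm : Tm
  cur : CName
  gf : FEnv
  gc : KEnv
  xi : XiEnv
  phi : Set Name
  hp : Heap
  Fm : Name → Option (Set Name)

structure PCfg where
  gf : FEnv
  gc : KEnv
  xi : XiEnv
  phi : Set Name
  hp : Heap
  Fm : Name → Option (Set Name)
  avail : Set Name
  topc : Option CName

inductive Cfg
  | act : ACfg → Cfg
  | pas : PCfg → Cfg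

def joinF (a b : FEnv) : FEnv := fun f => (a f) <|> (b f)

open Classical in
noncomputable def extendF (F : Name → Option (Set Name)) (s av : Set Name) :
    Name → Option (Set Name) :=
  fun n => if n ∈ s then some av else F n

/-- The (unified) LTS. With `vis = bra = false` this is the HOSC[HOSC] LTS;
`vis = true` adds the O-visibility restriction (GOSC[HOSC]);
`bra = true` adds the O-bracketing restriction (HOS[HOSC]); both give GOS[HOSC]. -/
inductive Step : Bool → Bool → Cfg → Option Act → Cfg → Prop
  | tau {vis bra : Bool} {M N : Tm} {c c' : CName} {gf : FEnv} {gc : KEnv} {xi : XiEnv}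
      {phi : Set Name} {h h' : Heap} {F : Name → Option (Set Name)} :
      ERed M c h N c' h' →
      Step vis bra (.act ⟨M, c, gf, gc, xi, phi, h, F⟩) none
        (.act ⟨N, c', gf, gc, xi, phi, h', F⟩)
  | pa {vis bra : Bool} {V : Tm} {c : CName} {A : AVal} {g' : FEnv} {gf : FEnv} {gc : KEnv}
      {xi : XiEnv} {phi : Set Name} {h : Heap} {F : Name → Option (Set Name)} :
      IsVal V → Decomp V c.ty A g' → A.linear → A.names ∩ phi = ∅ →
      Step vis bra (.act ⟨V, c, gf, gc, xi, phi, h, F⟩) (some (.pa c A))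
        (.pas ⟨joinF gf g', gc, xi, phi ∪ A.names, h, F,
               (F (Name.cn c)).getD ∅ ∪ A.names, Option.join (xi c)⟩)
  | pq {vis bra : Bool} {K V : Tm} {f : FName} {A : AVal} {c c' : CName} {g' : FEnv}
      {gf : FEnv} {gc : KEnv} {xi : XiEnv} {phi : Set Name} {h : Heap}
      {F : Name → Option (Set Name)} :
      IsECtx K → IsVal V → Decomp V f.dom A g' → A.linear →
      c'.ty = f.cod → (A.names ∪ {Name.cn c'}) ∩ phi = ∅ → Name.cn c' ∉ A.names →
      Step vis bra (.act ⟨K.fill (.app (.fname f) V), c, gf, gc, xi, phi, h, F⟩)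
        (some (.pq f A c'))
        (.pas ⟨joinF gf g', Function.update gc c' (some K),
               Function.update xi c' (some (some c)),
               phi ∪ A.names ∪ {Name.cn c'}, h, F,
               (F (Name.fn f)).getD ∅ ∪ A.names ∪ {Name.cn c'}, some c'⟩)
  | oa {vis bra : Bool} {K : Tm} {c c' : CName} {A : AVal} {gf : FEnv} {gc : KEnv}
      {xi : XiEnv} {phi : Set Name} {h : Heap} {F : Name → Option (Set Name)}
      {av : Set Name} {tc : Option CName} :
      AVal.HasTy A c.ty → A.linear → A.names ∩ phi = ∅ →
      gc c = some K → xi c = some (some c') →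
      (vis = true → Name.cn c ∈ av) → (bra = true → tc = some c) →
      Step vis bra (.pas ⟨gf, gc, xi, phi, h, F, av, tc⟩) (some (.oa c A))
        (.act ⟨K.fill A.toTm, c', gf, gc, xi, phi ∪ A.names, h, extendF F A.names av⟩)
  | oq {vis bra : Bool} {V : Tm} {f : FName} {A : AVal} {c : CName} {gf : FEnv} {gc : KEnv}
      {xi : XiEnv} {phi : Set Name} {h : Heap} {F : Name → Option (Set Name)}
      {av : Set Name} {tc : Option CName} :
      AVal.HasTy A f.dom → A.linear → c.ty = f.cod →
      (A.names ∪ {Name.cn c}) ∩ phi = ∅ → Name.cn c ∉ A.names →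
      gf f = some V →
      (vis = true → Name.fn f ∈ av) →
      Step vis bra (.pas ⟨gf, gc, xi, phi, h, F, av, tc⟩) (some (.oq f A c))
        (.act ⟨.app V A.toTm, c, gf, gc, Function.update xi c (some tc),
               phi ∪ A.names ∪ {Name.cn c}, h, extendF F (A.names ∪ {Name.cn c}) av⟩)

inductive Steps (vis bra : Bool) : Cfg → List Act → Cfg → Prop
  | nil {C : Cfg} : Steps vis bra C [] C
  | tau {C C' C'' : Cfg} {t : List Act} :
      Step vis bra C none C' → Steps vis bra C' t C'' → Steps vis bra C t C''
  | cons {C C' C'' : Cfg} {a : Act} {t : List Act} :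
      Step vis bra C (some a) C' → Steps vis bra C' t C'' → Steps vis bra C (a :: t) C''

def Traces (vis bra : Bool) (C : Cfg) : Set (List Act) := {t | ∃ C', Steps vis bra C t C'}

/-! ## Initial configurations and trace semantics -/

def AssignTyped (ρ : List AVal) (Γ : TyCtx) : Prop :=
  List.Forall₂ (fun A σ => AVal.HasTy A σ ∧ AVal.linear A) ρ Γ ∧
  List.Pairwise (fun A B => A.names ∩ B.names = ∅) ρ

def assignNames (ρ : List AVal) : Set Name := {n | ∃ A ∈ ρ, n ∈ A.names}

def initTm (M : Tm) (ρ : List AVal) : Tm := M.msubst (ρ.map AVal.toTm)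

def emptyF : Name → Option (Set Name) := fun _ => none

/-- C_M^{ρ,c} = ⟨M{ρ}, c, ∅, ∅, ν(ρ)∪{c}, ∅⟩ -/
def cfgInit (M : Tm) (ρ : List AVal) (c : CName) : Cfg :=
  .act ⟨initTm M ρ, c, (fun _ => none), (fun _ => none), (fun _ => none),
        assignNames ρ ∪ {Name.cn c}, Heap.empty, emptyF⟩

/-- C_{M,bra}^{ρ,c}: ξ initialized with [c ↦ ⊥] -/
def cfgInitBra (M : Tm) (ρ : List AVal) (c : CName) : Cfg :=
  .act ⟨initTm M ρ, c, (fun _ => none), (fun _ => none),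
        Function.update (fun _ => none : XiEnv) c (some none),
        assignNames ρ ∪ {Name.cn c}, Heap.empty, emptyF⟩

def TrSemHOSC (Γ : TyCtx) (τ : Ty) (M : Tm) : Set ((List AVal × CName) × List Act) :=
  {p | AssignTyped p.1.1 Γ ∧ p.1.2.ty = τ ∧ p.2 ∈ Traces false false (cfgInit M p.1.1 p.1.2)}

def TrSemGOSC (Γ : TyCtx) (τ : Ty) (M : Tm) : Set ((List AVal × CName) × List Act) :=
  {p | AssignTyped p.1.1 Γ ∧ p.1.2.ty = τ ∧ p.2 ∈ Traces true false (cfgInit M p.1.1 p.1.2)}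

def TrSemHOS (Γ : TyCtx) (τ : Ty) (M : Tm) : Set ((List AVal × CName) × List Act) :=
  {p | AssignTyped p.1.1 Γ ∧ p.1.2.ty = τ ∧ p.2 ∈ Traces false true (cfgInitBra M p.1.1 p.1.2)}

def TrSemGOS (Γ : TyCtx) (τ : Ty) (M : Tm) : Set ((List AVal × CName) × List Act) :=
  {p | AssignTyped p.1.1 Γ ∧ p.1.2.ty = τ ∧ p.2 ∈ Traces true true (cfgInitBra M p.1.1 p.1.2)}

/-! ## The ◦-translation and context configurations -/

/-- replace err by errn and each cont_τ(K) (with K : τ ⇒ σ) by cont_τ(K, ◦_σ) -/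
def Tm.toCirc : Tm → Tm
  | .errv => .fname errn
  | .contV τ σ K => .contE τ K.toCirc (tern σ)
  | .contE τ K c => .contE τ K.toCirc c
  | .pair a b => .pair a.toCirc b.toCirc
  | .fst a => .fst a.toCirc
  | .snd a => .snd a.toCirc
  | .lam τ a => .lam τ a.toCirc
  | .fix σ τ a => .fix σ τ a.toCirc
  | .app a b => .app a.toCirc b.toCirc
  | .newref τ a => .newref τ a.toCirc
  | .deref a => .deref a.toCirc
  | .assign a b => .assign a.toCirc b.toCirc
  | .ifte a b c => .ifte a.toCirc b.toCirc c.toCirc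
  | .arith op a b => .arith op a.toCirc b.toCirc
  | .cmp op a b => .cmp op a.toCirc b.toCirc
  | .refeq a b => .refeq a.toCirc b.toCirc
  | .callcc τ a => .callcc τ a.toCirc
  | .throw τ a b => .throw τ a.toCirc b.toCirc
  | t => t

def Heap.toCirc (h : Heap) : Heap := fun ℓ => (h ℓ).map Tm.toCirc

/-- (A⃗ᵢ, γ⃗ᵢ) ∈ AVal(γ)(Γ): componentwise decomposition of γ_◦ with mutually
disjoint names avoiding errn -/
def CtxDecomp (γ : List Tm) (Γ : TyCtx) (As : List AVal) (γs : List FEnv) : Prop :=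
  γ.length = Γ.length ∧ As.length = Γ.length ∧ γs.length = Γ.length ∧
  List.Forall₂ (fun (p : Tm × Ty) (q : AVal × FEnv) => Decomp p.1.toCirc p.2 q.1 q.2)
    (γ.zip Γ) (As.zip γs) ∧
  List.Pairwise (fun A B => A.names ∩ B.names = ∅) As ∧
  (∀ A ∈ As, Name.fn errn ∉ A.names) ∧
  (∀ A ∈ As, A.linear)

def stackF (γs : List FEnv) : FEnv := fun f => γs.foldr (fun ρ acc => (ρ f) <|> acc) none

/-- the context configuration C_{h,K,γ}^{γ⃗ᵢ,c} -/
def cfgCtx (h : Heap) (K : Tm) (As : List AVal) (γs : List FEnv) (c : CName) (τ' : Ty) : Cfg :=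
  .pas ⟨stackF γs,
        Function.update (fun _ => none : KEnv) c (some K.toCirc),
        Function.update (fun _ => none : XiEnv) c (some (some (tern τ'))),
        {n | ∃ A ∈ As, n ∈ A.names} ∪ {Name.cn c} ∪ circNames ∪ {Name.fn errn},
        Heap.toCirc h, emptyF, Set.univ, none⟩

/-- the passive configuration of the definability lemmas:
⟨γ_◦ · [c ↦ K_◦], {c ↦ tern_{τ'}}, φ ⊎ {c} ⊎ ◦ ⊎ {errn}, h_◦⟩ -/
def cfgDef (h : Heap) (K : Tm) (γ : FEnv) (c : CName) (τ' : Ty) (φ : Set Name) : Cfg :=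
  .pas ⟨(fun f => (γ f).map Tm.toCirc),
        Function.update (fun _ => none : KEnv) c (some K.toCirc),
        Function.update (fun _ => none : XiEnv) c (some (some (tern τ'))),
        φ ∪ {Name.cn c} ∪ circNames ∪ {Name.fn errn},
        Heap.toCirc h, emptyF, Set.univ, none⟩

/-! ## Name permutations -/

structure NPerm where
  pf : Equiv.Perm FName
  pc : Equiv.Perm CName
  tpf : ∀ f : FName, (pf f).dom = f.dom ∧ (pf f).cod = f.cod
  tpc : ∀ c : CName, (pc c).ty = c.ty

def NPerm.name (π : NPerm) : Name → Name
  | .fn f => .fn (π.pf f)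
  | .cn c => .cn (π.pc c)

def NPerm.fixes (π : NPerm) (X : Set Name) : Prop := ∀ n ∈ X, π.name n = n

def AVal.rename (π : NPerm) : AVal → AVal
  | .fn f => .fn (π.pf f)
  | .pair a b => .pair (a.rename π) (b.rename π)
  | a => a

def Act.rename (π : NPerm) : Act → Act
  | .pa c A => .pa (π.pc c) (A.rename π)
  | .pq f A c => .pq (π.pf f) (A.rename π) (π.pc c)
  | .oa c A => .oa (π.pc c) (A.rename π)
  | .oq f A c => .oq (π.pf f) (A.rename π) (π.pc c)

/-! ## Visibility -/

/-- the set Vis_P(t) of P-visible names of an odd-length (◦⊎{errn}, φ⊎{c})-trace -/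
inductive VisP (φ : Set Name) (c : CName) : List Act → Set Name → Prop
  | ansInit (t : List Act) (A : AVal) :
      VisP φ c (t ++ [.oa c A]) ({Name.fn errn} ∪ circNames ∪ A.names)
  | ansJust {t t' : List Act} {S : Set Name} (f : FName) (A'' : AVal) (c' : CName) (A' : AVal) :
      VisP φ c t S → c' ≠ c →
      VisP φ c (t ++ [.pq f A'' c'] ++ t' ++ [.oa c' A']) (S ∪ A'.names)
  | qInit (t : List Act) (f' : FName) (A' : AVal) (c' : CName) : Name.fn f' ∈ φ →
      VisP φ c (t ++ [.oq f' A' c']) ({Name.fn errn} ∪ circNames ∪ A'.names ∪ {Name.cn c'})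
  | qJustQ {t t' : List Act} {S : Set Name} (f'' : FName) (A'' : AVal) (c'' : CName)
      (f' : FName) (A' : AVal) (c' : CName) :
      VisP φ c t S → Name.fn f' ∈ A''.names →
      VisP φ c (t ++ [.pq f'' A'' c''] ++ t' ++ [.oq f' A' c']) (S ∪ A'.names ∪ {Name.cn c'})
  | qJustA {t t' : List Act} {S : Set Name} (c'' : CName) (A'' : AVal)
      (f' : FName) (A' : AVal) (c' : CName) :
      VisP φ c t S → Name.fn f' ∈ A''.names →
      VisP φ c (t ++ [.pa c'' A''] ++ t' ++ [.oq f' A' c']) (S ∪ A'.names ∪ {Name.cn c'})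

/-- P-visibility of a (◦⊎{errn}, φ⊎{c})-trace -/
def PVisible (φ : Set Name) (c : CName) (t : List Act) : Prop :=
  (∀ pre f A d, pre ++ [Act.pq f A d] <+: t → Even (pre.length + 1) →
      ∃ S, VisP φ c pre S ∧ Name.fn f ∈ S) ∧
  (∀ pre d A, pre ++ [Act.pa d A] <+: t → Even (pre.length + 1) →
      ∃ S, VisP φ c pre S ∧ Name.cn d ∈ S)

/-- the set Vis_O(t) of O-visible names of an odd-length (φ⊎{c}, ∅)-trace -/
inductive VisO (φ : Set Name) (c : CName) : List Act → Set Name → Prop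
  | ansInit (t : List Act) (A : AVal) :
      VisO φ c (t ++ [.pa c A]) A.names
  | ansJust {t t' : List Act} {S : Set Name} (f : FName) (A'' : AVal) (c' : CName) (A' : AVal) :
      VisO φ c t S → c' ≠ c →
      VisO φ c (t ++ [.oq f A'' c'] ++ t' ++ [.pa c' A']) (S ∪ A'.names)
  | qInit (t : List Act) (f' : FName) (A' : AVal) (c' : CName) : Name.fn f' ∈ φ →
      VisO φ c (t ++ [.pq f' A' c']) (A'.names ∪ {Name.cn c'})
  | qJustQ {t t' : List Act} {S : Set Name} (f'' : FName) (A'' : AVal) (c'' : CName)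
      (f' : FName) (A' : AVal) (c' : CName) :
      VisO φ c t S → Name.fn f' ∈ A''.names →
      VisO φ c (t ++ [.oq f'' A'' c''] ++ t' ++ [.pq f' A' c']) (S ∪ A'.names ∪ {Name.cn c'})
  | qJustA {t t' : List Act} {S : Set Name} (c'' : CName) (A'' : AVal)
      (f' : FName) (A' : AVal) (c' : CName) :
      VisO φ c t S → Name.fn f' ∈ A''.names →
      VisO φ c (t ++ [.oa c'' A''] ++ t' ++ [.pq f' A' c']) (S ∪ A'.names ∪ {Name.cn c'})

/-- O-visibility of a (φ⊎{c}, ∅)-trace -/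
def OVisible (φ : Set Name) (c : CName) (t : List Act) : Prop :=
  (∀ pre f A d, pre ++ [Act.oq f A d] <+: t → Even (pre.length + 1) →
      ∃ S, VisO φ c pre S ∧ Name.fn f ∈ S) ∧
  (∀ pre d A, pre ++ [Act.oa d A] <+: t → Even (pre.length + 1) →
      ∃ S, VisO φ c pre S ∧ Name.cn d ∈ S)

/-! ## Bracketing -/

/-- top_P(t) for odd-length ({◦_{τ'},errn}, φ⊎{c})-traces -/
inductive TopP (c : CName) (τ' : Ty) : List Act → Option CName → Prop
  | ansInit (t : List Act) (A : AVal) : TopP c τ' (t ++ [.oa c A]) (some (tern τ'))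
  | ansJust {t₁ t₂ : List Act} {r : Option CName} (f : FName) (A'' : AVal) (c' : CName)
      (A' : AVal) :
      TopP c τ' t₁ r → TopP c τ' (t₁ ++ [.pq f A'' c'] ++ t₂ ++ [.oa c' A']) r
  | quest (t : List Act) (f : FName) (A' : AVal) (c' : CName) :
      TopP c τ' (t ++ [.oq f A' c']) (some c')

/-- P-bracketing: each P-answer answers the current top continuation -/
def PBracketed (c : CName) (τ' : Ty) (t : List Act) : Prop :=
  ∀ pre d A, pre ++ [Act.pa d A] <+: t → ∃ r, TopP c τ' pre r ∧ r = some d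

/-- top_O(t) for odd-length (φ⊎{c}, ∅)-traces; `none` is ⊥ -/
inductive TopO (c : CName) : List Act → Option CName → Prop
  | ansInit (t : List Act) (A : AVal) : TopO c (t ++ [.pa c A]) none
  | ansJust {t₁ t₂ : List Act} {r : Option CName} (f : FName) (A'' : AVal) (c' : CName)
      (A' : AVal) :
      TopO c t₁ r → TopO c (t₁ ++ [.oq f A'' c'] ++ t₂ ++ [.pa c' A']) r
  | quest (t : List Act) (f : FName) (A' : AVal) (c' : CName) :
      TopO c (t ++ [.pq f A' c']) (some c')

/-- O-bracketing: each O-answer answers the current top continuation -/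
def OBracketed (c : CName) (t : List Act) : Prop :=
  ∀ pre d A, pre ++ [Act.oa d A] <+: t → TopO c pre (some d)

/-- complete traces -/
def CompleteTr (c : CName) (t : List Act) : Prop :=
  Odd t.length ∧ OBracketed c t ∧ TopO c t none

/-- trace inclusion restricted to complete traces -/
def TrIncC (S₁ S₂ : Set ((List AVal × CName) × List Act)) : Prop :=
  ∀ p ∈ S₁, CompleteTr p.1.2 p.2 → p ∈ S₂


/-! ## Auxiliary development for P-bracketing -/

/-- control-free terms (no callcc, throw, contV, contE) -/
def NC : Tm → Prop
  | .callcc _ _ => False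
  | .throw _ _ _ => False
  | .contV _ _ _ => False
  | .contE _ _ _ => False
  | .pair a b => NC a ∧ NC b
  | .fst a => NC a
  | .snd a => NC a
  | .lam _ a => NC a
  | .fix _ _ a => NC a
  | .app a b => NC a ∧ NC b
  | .newref _ a => NC a
  | .deref a => NC a
  | .assign a b => NC a ∧ NC b
  | .ifte a b c => NC a ∧ NC b ∧ NC c
  | .arith _ a b => NC a ∧ NC b
  | .cmp _ a b => NC a ∧ NC b
  | .refeq a b => NC a ∧ NC b
  | _ => True

lemma self_mem_subterms (M : Tm) : M ∈ M.subterms := by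
  cases M <;> simp [Tm.subterms]

lemma inFrag_NC : ∀ M : Tm, M.inFrag .HOS → NC M := by
  intro M
  induction M with
  | pair a b iha ihb =>
      intro h
      exact ⟨iha (fun N hN => h N (by simp [Tm.subterms, hN])),
             ihb (fun N hN => h N (by simp [Tm.subterms, hN]))⟩
  | fst a iha =>
      intro h; exact iha (fun N hN => h N (by simp [Tm.subterms, hN]))
  | snd a iha =>
      intro h; exact iha (fun N hN => h N (by simp [Tm.subterms, hN]))
  | lam τ a iha =>
      intro h; exact iha (fun N hN => h N (by simp [Tm.subterms, hN]))
  | fix σ τ a iha =>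
      intro h; exact iha (fun N hN => h N (by simp [Tm.subterms, hN]))
  | app a b iha ihb =>
      intro h
      exact ⟨iha (fun N hN => h N (by simp [Tm.subterms, hN])),
             ihb (fun N hN => h N (by simp [Tm.subterms, hN]))⟩
  | newref τ a iha =>
      intro h; exact iha (fun N hN => h N (by simp [Tm.subterms, hN]))
  | deref a iha =>
      intro h; exact iha (fun N hN => h N (by simp [Tm.subterms, hN]))
  | assign a b iha ihb =>
      intro h
      exact ⟨iha (fun N hN => h N (by simp [Tm.subterms, hN])),
             ihb (fun N hN => h N (by simp [Tm.subterms, hN]))⟩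
  | ifte a b c iha ihb ihc =>
      intro h
      exact ⟨iha (fun N hN => h N (by simp [Tm.subterms, hN])),
             ihb (fun N hN => h N (by simp [Tm.subterms, hN])),
             ihc (fun N hN => h N (by simp [Tm.subterms, hN]))⟩
  | arith op a b iha ihb =>
      intro h
      exact ⟨iha (fun N hN => h N (by simp [Tm.subterms, hN])),
             ihb (fun N hN => h N (by simp [Tm.subterms, hN]))⟩
  | cmp op a b iha ihb =>
      intro h
      exact ⟨iha (fun N hN => h N (by simp [Tm.subterms, hN])),
             ihb (fun N hN => h N (by simp [Tm.subterms, hN]))⟩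
  | refeq a b iha ihb =>
      intro h
      exact ⟨iha (fun N hN => h N (by simp [Tm.subterms, hN])),
             ihb (fun N hN => h N (by simp [Tm.subterms, hN]))⟩
  | callcc τ a iha =>
      intro h
      have := h _ (self_mem_subterms (.callcc τ a))
      simp [Tm.headOK, Frag.hasCont] at this
  | throw τ a b iha ihb =>
      intro h
      have := h _ (self_mem_subterms (.throw τ a b))
      simp [Tm.headOK, Frag.hasCont] at this
  | contV τ σ Kk ihK =>
      intro h
      have := h _ (self_mem_subterms (.contV τ σ Kk))
      simp [Tm.headOK, Frag.hasCont] at this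
  | contE τ Kk cc ihK =>
      intro h
      have := h _ (self_mem_subterms (.contE τ Kk cc))
      simp [Tm.headOK] at this
  | _ => intro _; trivial

lemma NC_toCirc : ∀ M : Tm, NC M → NC M.toCirc := by
  intro M
  induction M <;> simp_all [Tm.toCirc, NC]

lemma NC_toTm (A : AVal) : NC A.toTm := by
  induction A <;> simp_all [AVal.toTm, NC]

lemma NC_subst : ∀ (M : Tm) (k : ℕ) (V : Tm), NC M → NC V → NC (M.subst k V) := by
  intro M
  induction M <;> intro k V hM hV <;>
    first
      | (simp only [Tm.subst]; split
         · exact hV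
         · split <;> trivial)
      | simp_all [Tm.subst, NC]

lemma NC_fill : ∀ (K M : Tm), NC K → NC M → NC (K.fill M) := by
  intro K
  induction K <;> intro M hK hM <;> simp_all [Tm.fill, NC]

/-- refilling a context with another control-free term stays control-free -/
lemma NC_fillM : ∀ (K : Tm) {M M' : Tm}, NC (K.fill M) → NC M' → NC (K.fill M') := by
  intro K
  induction K <;> intro M M' h h' <;> simp_all [Tm.fill, NC] <;> aesop

/-- the term in the hole of an evaluation context is control-free -/
lemma NC_fill_inv : ∀ {K : Tm}, IsECtx K → ∀ {M : Tm}, NC (K.fill M) → NC M := by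
  intro K hK
  induction hK <;> intro M h <;> simp_all [Tm.fill, NC]

def NCheap (h : Heap) : Prop := ∀ ℓ V, h ℓ = some V → NC V
def NCF (g : FEnv) : Prop := ∀ f V, g f = some V → NC V
def NCK (g : KEnv) : Prop := ∀ d Kd, g d = some Kd → ∀ M, NC M → NC (Kd.fill M)

lemma NC_ofBool (b : Bool) : NC (Tm.ofBool b) := by
  cases b <;> simp [Tm.ofBool, NC]

lemma redbase_nc {M h M' h'} (hr : RedBase M h M' h') (hM : NC M) (hh : NCheap h) :
    NC M' ∧ NCheap h' := by
  cases hr with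
  | beta hV =>
      simp [NC] at hM
      exact ⟨NC_subst _ _ _ hM.1 hM.2, hh⟩
  | fixbeta hV =>
      simp [NC] at hM
      exact ⟨NC_subst _ _ _ (NC_subst _ _ _ hM.1 hM.2) (by simp [NC, hM.1]), hh⟩
  | fst h1 h2 => simp [NC] at hM; exact ⟨hM.1, hh⟩
  | snd h1 h2 => simp [NC] at hM; exact ⟨hM.2, hh⟩
  | iftt => simp [NC] at hM; exact ⟨hM.1, hh⟩
  | ifff => simp [NC] at hM; exact ⟨hM.2, hh⟩
  | arith => exact ⟨trivial, hh⟩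
  | cmp => exact ⟨NC_ofBool _, hh⟩
  | refeq => exact ⟨NC_ofBool _, hh⟩
  | deref hl => exact ⟨hh _ _ hl, hh⟩
  | newref hV hl =>
      simp [NC] at hM
      refine ⟨trivial, fun ℓ' V hV' => ?_⟩
      simp [Heap.upd] at hV'
      split at hV'
      · cases hV'; exact hM
      · exact hh _ _ hV'
  | assign hV hl =>
      simp [NC] at hM
      refine ⟨trivial, fun ℓ' V hV' => ?_⟩
      simp [Heap.upd] at hV'
      split at hV'
      · cases hV'; exact hM
      · exact hh _ _ hV'

lemma ered_nc {M cu h N cu' h'} (hr : ERed M cu h N cu' h') (hM : NC M) (hh : NCheap h) :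
    NC N ∧ cu' = cu ∧ NCheap h' := by
  cases hr with
  | base hK hb =>
      obtain ⟨h3, h4⟩ := redbase_nc hb (NC_fill_inv hK hM) hh
      exact ⟨NC_fillM _ hM h3, rfl, h4⟩
  | callcc hK =>
      exact absurd (NC_fill_inv hK hM) (by simp [NC])
  | throw hK hK' hV =>
      exact absurd (NC_fill_inv hK hM) (by simp [NC])

lemma decomp_nc {V τv A g} (hD : Decomp V τv A g) (hV : NC V) :
    ∀ f W, g f = some W → NC W := by
  induction hD with
  | unit => intro f W h; simp at h
  | tt => intro f W h; simp at h
  | ff => intro f W h; simp at h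
  | int n => intro f W h; simp at h
  | @fn V' f' hVv =>
      intro f W h
      by_cases hf : f = f'
      · subst hf; simp [Function.update] at h; subst h; exact hV
      · simp [Function.update, hf] at h
  | @pair u v σv τv A' B' ga gb hDa hDb hdisj iha ihb =>
      intro f W h
      simp [NC] at hV
      cases hga : ga f with
      | none => simp [hga] at h; exact ihb hV.2 _ _ h
      | some W' =>
          simp [hga] at h
          exact iha hV.1 _ _ (h ▸ hga)

lemma joinF_some {a b : FEnv} {f V} (h : joinF a b f = some V) :
    a f = some V ∨ b f = some V := by
  cases ha : a f <;> simp [joinF, ha] at h <;> simp [h]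

/-! ## The invariant -/

def Qinv (c : CName) (τ' : Ty) (s : List Act) (gc : KEnv) (xi : XiEnv) : Prop :=
  ∀ d c' Kd, gc d = some Kd → xi d = some (some c') →
    (d = c ∧ c' = tern τ') ∨
    ∃ t₁ t₂ f A, s = t₁ ++ [Act.pq f A d] ++ t₂ ∧ TopP c τ' t₁ (some c')

def PhiGc (gc : KEnv) (phi : Set Name) : Prop := ∀ d, gc d ≠ none → Name.cn d ∈ phi

def CInv (c : CName) (τ' : Ty) (s : List Act) : Cfg → Prop
  | .act A => NC A.tm ∧ NCF A.gf ∧ NCK A.gc ∧ NCheap A.hp ∧ PhiGc A.gc A.phi ∧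
      Qinv c τ' s A.gc A.xi ∧ TopP c τ' s (some A.cur)
  | .pas P => NCF P.gf ∧ NCK P.gc ∧ NCheap P.hp ∧ PhiGc P.gc P.phi ∧
      Qinv c τ' s P.gc P.xi

lemma qinv_ext {c τ' s gc xi} (h : Qinv c τ' s gc xi) (u : List Act) :
    Qinv c τ' (s ++ u) gc xi := by
  intro d c' Kd h1 h2
  rcases h d c' Kd h1 h2 with h3 | ⟨t₁, t₂, f, A, h3, h4⟩
  · exact Or.inl h3
  · exact Or.inr ⟨t₁, t₂ ++ u, f, A, by simp [h3], h4⟩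

lemma step_inv {c : CName} {τ' : Ty} {C C' : Cfg} {a : Option Act}
    (hs : Step false false C a C') (s : List Act) (hI : CInv c τ' s C) :
    CInv c τ' (s ++ a.toList) C' ∧
    (∀ d A, a = some (Act.pa d A) → TopP c τ' s (some d)) := by
  cases hs with
  | tau hr =>
      obtain ⟨hM, hgf, hgc, hhp, hphi, hQ, hT⟩ := hI
      obtain ⟨h1, h2, h3⟩ := ered_nc hr hM hhp
      subst h2
      exact ⟨⟨h1, hgf, hgc, h3, hphi, by simpa using hQ, by simpa using hT⟩,
             by intro d A h; simp at h⟩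
  | @pa V cu A g' gf gc xi phi hp F hV hD hlin hdisj =>
      obtain ⟨hM, hgf, hgc, hhp, hphi, hQ, hT⟩ := hI
      refine ⟨⟨?_, hgc, hhp, fun d hd => Set.mem_union_left _ (hphi d hd),
              qinv_ext hQ _⟩, ?_⟩
      · intro f W h
        rcases joinF_some h with h | h
        · exact hgf _ _ h
        · exact decomp_nc hD hM _ _ h
      · intro d A' h
        injection h with h
        injection h with h1 h2
        subst h1
        exact hT
  | @pq Kq V f A cu c0 g' gf gc xi phi hp F hK hV hD hlin hty hdisj hnotin =>
      obtain ⟨hM, hgf, hgc, hhp, hphi, hQ, hT⟩ := hI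
      have hApp := NC_fill_inv hK hM
      simp [NC] at hApp
      refine ⟨⟨?_, ?_, hhp, ?_, ?_⟩, by intro d A' h; simp at h⟩
      · intro f' W h
        rcases joinF_some h with h | h
        · exact hgf _ _ h
        · exact decomp_nc hD hApp _ _ h
      · intro d Kd h
        by_cases hd : d = c0
        · subst hd; simp [Function.update] at h; subst h
          exact fun M hM' => NC_fillM _ hM hM'
        · simp [Function.update, hd] at h; exact hgc _ _ h
      · intro d hd
        by_cases hdc : d = c0
        · subst hdc; exact Set.mem_union_right _ rfl
        · simp [Function.update, hdc] at hd
          exact Set.mem_union_left _ (Set.mem_union_left _ (hphi d hd))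
      · intro d c' Kd h1 h2
        by_cases hd : d = c0
        · subst hd
          simp [Function.update] at h2
          subst h2
          exact Or.inr ⟨s, [], f, A, by simp, hT⟩
        · simp [Function.update, hd] at h1 h2
          rcases hQ d c' Kd h1 h2 with h3 | ⟨t₁, t₂, f', A', h3, h4⟩
          · exact Or.inl h3
          · exact Or.inr ⟨t₁, t₂ ++ [Act.pq f A c0], f', A', by simp [h3], h4⟩
  | @oa Kq c0 c0' A gf gc xi phi hp F av tc hty hlin hdisj hgc0 hxi0 hvis hbra =>
      obtain ⟨hgf, hgc, hhp, hphi, hQ⟩ := hI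
      refine ⟨⟨hgc _ _ hgc0 _ (NC_toTm A), hgf, hgc, hhp,
              fun d hd => Set.mem_union_left _ (hphi d hd), qinv_ext hQ _, ?_⟩,
              by intro d A' h; simp at h⟩
      rcases hQ c0 c0' Kq hgc0 hxi0 with ⟨h1, h2⟩ | ⟨t₁, t₂, f, A', h3, h4⟩
      · subst h1; subst h2
        exact TopP.ansInit s A
      · have := TopP.ansJust (c := c) (τ' := τ') (t₂ := t₂) f A' c0 A h4
        simpa [h3, List.append_assoc] using this
  | @oq V f A c0 gf gc xi phi hp F av tc hty hlin hcod hdisj hnotin hgf0 hvis =>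
      obtain ⟨hgf, hgc, hhp, hphi, hQ⟩ := hI
      have hc0 : Name.cn c0 ∉ phi := by
        intro hmem
        have : Name.cn c0 ∈ (A.names ∪ {Name.cn c0}) ∩ phi :=
          ⟨Set.mem_union_right _ rfl, hmem⟩
        rw [hdisj] at this
        exact this
      refine ⟨⟨⟨hgf _ _ hgf0, NC_toTm A⟩, hgf, hgc, hhp, ?_, ?_,
              by simpa using TopP.quest s f A c0⟩,
              by intro d A' h; simp at h⟩
      · intro d hd
        exact Set.mem_union_left _ (Set.mem_union_left _ (hphi d hd))
      · intro d c' Kd h1 h2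
        by_cases hd : d = c0
        · subst hd
          exact absurd (hphi _ (fun hn => by
            have h1' : gc d = some Kd := h1
            rw [show gc d = none from hn] at h1'
            cases h1')) hc0
        · simp [Function.update, hd] at h2
          rcases hQ d c' Kd h1 h2 with h3 | ⟨t₁, t₂, f', A', h3, h4⟩
          · exact Or.inl h3
          · exact Or.inr ⟨t₁, t₂ ++ [Act.oq f A c0], f', A', by simp [h3], h4⟩

lemma steps_pb {c : CName} {τ' : Ty} {C C' : Cfg} {t : List Act}
    (hs : Steps false false C t C') :
    ∀ s, CInv c τ' s C → ∀ pre d A, pre ++ [Act.pa d A] <+: t →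
      TopP c τ' (s ++ pre) (some d) := by
  induction hs with
  | nil => intro s _ pre d A hp; exact absurd hp (by simp)
  | tau h1 h2 ih =>
      intro s hI pre d A hp
      have hI' := (step_inv h1 s hI).1
      simp at hI'
      exact ih s hI' pre d A hp
  | cons h1 h2 ih =>
      intro s hI pre d A hp
      cases pre with
      | nil =>
          simp [List.cons_prefix_cons] at hp
          have := (step_inv h1 s hI).2 d A (by simp [hp])
          simpa using this
      | cons b pre' =>
          rw [List.cons_append, List.cons_prefix_cons] at hp
          obtain ⟨hb, hp'⟩ := hp
          subst hb
          have hI' := (step_inv h1 s hI).1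
          have := ih (s ++ [b]) (by simpa using hI') pre' d A hp'
          simpa [List.append_assoc] using this


lemma stackF_some : ∀ (γs : List FEnv) (f : FName) (V : Tm),
    stackF γs f = some V → ∃ ρ ∈ γs, ρ f = some V := by
  intro γs
  induction γs with
  | nil => intro f V h; simp [stackF] at h
  | cons ρ rest ih =>
      intro f V h
      have h' : (ρ f <|> stackF rest f) = some V := h
      cases hρ : ρ f with
      | none =>
          rw [hρ] at h'; simp at h'
          obtain ⟨ρ', hm, he⟩ := ih f V h'
          exact ⟨ρ', List.mem_cons_of_mem _ hm, he⟩
      | some W =>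
          rw [hρ] at h'; simp at h'
          exact ⟨ρ, List.mem_cons_self, by rw [hρ, h']⟩

/-- P-bracketing of HOS contexts: every trace generated in the
HOSC[HOSC] LTS from a context configuration C_{h,K,γ}^{γ⃗ᵢ,c} built from HOS syntax
is P-bracketed. -/
theorem pbracketing_hos_contexts
    (Γ : TyCtx) (St : LocTy) (h : Heap) (K : Tm) (γ : List Tm) (τ τ' : Ty)
    (hh : HeapTyped St h) (hhf : Heap.inFrag Frag.HOS h)
    (hK : IsECtx K) (hKf : Tm.inFrag Frag.HOS K) (hKt : Typed St [] (some τ) K τ')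
    (hγ : SubstTyped St γ Γ) (hγf : ∀ V ∈ γ, Tm.inFrag Frag.HOS V)
    (As : List AVal) (γs : List FEnv) (hd : CtxDecomp γ Γ As γs)
    (c : CName) (hc : c.ty = τ) (hcc : Name.cn c ∉ circNames) :
    ∀ t ∈ Traces false false (cfgCtx h K As γs c τ'),
      PBracketed c τ' t := by
  intro t ht
  obtain ⟨C', hsteps⟩ := ht
  have hInv : CInv c τ' [] (cfgCtx h K As γs c τ') := by
    obtain ⟨hl1, hl2, hl3, hF2, hpw, herr, hlinA⟩ := hd
    refine ⟨?_, ?_, ?_, ?_, ?_⟩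
    · intro f V hfV
      obtain ⟨ρ, hρmem, hρf⟩ := stackF_some γs f V hfV
      obtain ⟨i, hi, hρi⟩ := List.mem_iff_getElem.1 hρmem
      have hiΓ : i < Γ.length := hl3 ▸ hi
      have hiγ : i < γ.length := by rw [hl1]; exact hiΓ
      have hiAs : i < As.length := by rw [hl2]; exact hiΓ
      have hzl : i < (γ.zip Γ).length := by
        rw [List.length_zip]; exact lt_min hiγ hiΓ
      have hzr : i < (As.zip γs).length := by
        rw [List.length_zip]; exact lt_min hiAs hi
      have hF := (List.forall₂_iff_get.1 hF2).2 i hzl hzr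
      simp only [List.get_eq_getElem, List.getElem_zip] at hF
      have hNC : NC ((γ[i]'hiγ).toCirc) :=
        NC_toCirc _ (inFrag_NC _ (hγf _ (List.mem_iff_getElem.2 ⟨i, hiγ, rfl⟩)))
      exact decomp_nc hF hNC f V (by rw [hρi]; exact hρf)
    · intro d Kd hKd M hM
      by_cases hdc : d = c
      · subst hdc
        simp [Function.update] at hKd
        subst hKd
        exact NC_fill _ _ (NC_toCirc _ (inFrag_NC _ hKf)) hM
      · simp [Function.update, hdc] at hKd
    · intro ℓ V hV
      simp only [Heap.toCirc, Option.map_eq_some_iff] at hV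
      obtain ⟨W, hW, rfl⟩ := hV
      exact NC_toCirc _ (inFrag_NC _ (hhf _ _ hW))
    · intro d hdne
      by_cases hdc : d = c
      · subst hdc
        exact Set.mem_union_left _ (Set.mem_union_left _ (Set.mem_union_right _ rfl))
      · simp [Function.update, hdc] at hdne
    · intro d c' Kd h1 h2
      by_cases hdc : d = c
      · subst hdc
        simp [Function.update] at h2
        exact Or.inl ⟨rfl, h2.symm⟩
      · simp [Function.update, hdc] at h1
  intro pre d A hpre
  exact ⟨some d, by simpa using steps_pb hsteps [] hInv pre d A hpre, rfl⟩

end OGS
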